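/- Let A and B be Hermitian matrices whose eigenvalues all lie in the interval [-2, 2). If exp(-i(π/2)A) and exp(-i(π/2)B) commute, then A and B commute. -/

import Mathlib

open Matrix
open Polynomial

noncomputable section

def matConjAlgHom {n : ℕ} (u : (Matrix (Fin n) (Fin n) ℂ)ˣ) :
    Matrix (Fin n) (Fin n) ℂ →ₐ[ℂ] Matrix (Fin n) (Fin n) ℂ where
  toFun M := ↑u * M * ↑u⁻¹
  map_one' := by show (↑u : Matrix (Fin n) (Fin n) ℂ) * 1 * (↑u⁻¹ : Matrix (Fin n) (Fin n) ℂ) = 1; rw [mul_one]; exact u.mul_inv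
  map_mul' M N := by
    show (↑u : Matrix (Fin n) (Fin n) ℂ) * (M * N) * (↑u⁻¹ : Matrix (Fin n) (Fin n) ℂ)
      = ((↑u : Matrix (Fin n) (Fin n) ℂ) * M * (↑u⁻¹ : Matrix (Fin n) (Fin n) ℂ)) * ((↑u : Matrix (Fin n) (Fin n) ℂ) * N * (↑u⁻¹ : Matrix (Fin n) (Fin n) ℂ))
    calc (↑u : Matrix (Fin n) (Fin n) ℂ) * (M * N) * ↑u⁻¹
        = ↑u * M * (((↑u⁻¹ : Matrix (Fin n) (Fin n) ℂ) * ↑u) * (N * ↑u⁻¹)) := by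
          rw [u.inv_mul, one_mul]; simp only [mul_assoc]
      _ = (↑u * M * ↑u⁻¹) * (↑u * N * ↑u⁻¹) := by
          simp only [mul_assoc]
  map_zero' := by simp
  map_add' M N := by simp [mul_add, add_mul]
  commutes' r := by
    show (↑u : Matrix (Fin n) (Fin n) ℂ) * algebraMap ℂ _ r * (↑u⁻¹ : Matrix (Fin n) (Fin n) ℂ) = algebraMap ℂ _ r
    simp only [Algebra.algebraMap_eq_smul_one, Matrix.mul_smul, Matrix.smul_mul, mul_one]
    rw [u.mul_inv]

lemma aeval_matConj {n : ℕ} (u : (Matrix (Fin n) (Fin n) ℂ)ˣ)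
    (M : Matrix (Fin n) (Fin n) ℂ) (p : ℂ[X]) :
    aeval ((↑u : Matrix (Fin n) (Fin n) ℂ) * M * (↑u⁻¹ : Matrix (Fin n) (Fin n) ℂ)) p
      = (↑u : Matrix (Fin n) (Fin n) ℂ) * aeval M p * (↑u⁻¹ : Matrix (Fin n) (Fin n) ℂ) :=
  aeval_algHom_apply (matConjAlgHom u) M p

lemma commute_aeval_aeval {R : Type*} [Ring R] [Algebra ℂ R] {x y : R}
    (h : Commute x y) (p q : ℂ[X]) : Commute (aeval x p) (aeval y q) := by
  have key : ∀ {a b : R}, Commute a b → ∀ r : ℂ[X], Commute (aeval a r) b := by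
    intro a b hab r
    induction r using Polynomial.induction_on' with
    | add p q hp hq => simpa [map_add] using hp.add_left hq
    | monomial m c =>
      rw [aeval_monomial]
      exact (Algebra.commute_algebraMap_left c b).mul_left (hab.pow_left m)
  exact (key ((key h p).symm) q).symm

lemma aeval_exp_smul {n : ℕ} (A : Matrix (Fin n) (Fin n) ℂ) (hA : A.IsHermitian)
    (s : ℂ) (p : ℂ[X])
    (hp : ∀ i, p.eval (Complex.exp (s * hA.eigenvalues i)) = (hA.eigenvalues i : ℂ)) :
    aeval (NormedSpace.exp (s • A)) p = A := by
  set U : Matrix (Fin n) (Fin n) ℂ := (hA.eigenvectorUnitary : Matrix (Fin n) (Fin n) ℂ) with hUdef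
  have hU1 : U * star U = 1 := mem_unitaryGroup_iff.mp hA.eigenvectorUnitary.2
  have hU2 : star U * U = 1 := mem_unitaryGroup_iff'.mp hA.eigenvectorUnitary.2
  set u : (Matrix (Fin n) (Fin n) ℂ)ˣ := ⟨U, star U, hU1, hU2⟩ with hudef
  have hcoe : (↑u : Matrix (Fin n) (Fin n) ℂ) = U := rfl
  have hcoeinv : (↑u⁻¹ : Matrix (Fin n) (Fin n) ℂ) = star U := rfl
  have hspec : A = (↑u : Matrix (Fin n) (Fin n) ℂ) * diagonal (fun i => (hA.eigenvalues i : ℂ)) * (↑u⁻¹ : Matrix (Fin n) (Fin n) ℂ) := by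
    rw [hcoe, hcoeinv]
    exact hA.spectral_theorem
  have hsmul : s • A = (↑u : Matrix (Fin n) (Fin n) ℂ) * diagonal (fun i => s * (hA.eigenvalues i : ℂ)) * (↑u⁻¹ : Matrix (Fin n) (Fin n) ℂ) := by
    have hd : s • (diagonal fun i => (hA.eigenvalues i : ℂ))
        = diagonal (fun i => s * (hA.eigenvalues i : ℂ)) := by
      rw [← Matrix.diagonal_smul]
      congr 1
    conv_lhs => rw [hspec]
    rw [← hd]
    simp only [Matrix.smul_mul, Matrix.mul_smul]
  have hexp : NormedSpace.exp (s • A)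
      = (↑u : Matrix (Fin n) (Fin n) ℂ) * diagonal (fun i => Complex.exp (s * hA.eigenvalues i)) * (↑u⁻¹ : Matrix (Fin n) (Fin n) ℂ) := by
    rw [hsmul, Matrix.exp_units_conj, Matrix.exp_diagonal, Pi.exp_def]
    simp [← Complex.exp_eq_exp_ℂ]
  rw [hexp, aeval_matConj]
  have hdiag : aeval (diagonal fun i => Complex.exp (s * hA.eigenvalues i)) p
      = diagonal (fun i => p.eval (Complex.exp (s * hA.eigenvalues i))) := by
    rw [show (diagonal fun i => Complex.exp (s * hA.eigenvalues i))
      = diagonalAlgHom ℂ (fun i => Complex.exp (s * hA.eigenvalues i)) from rfl,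
      aeval_algHom_apply]
    simp [diagonalAlgHom, aeval_pi_apply]
    rfl
  rw [hdiag]
  simp only [hp]
  exact hspec.symm

theorem exp_commute_of_hermitian_eigenvalues_Ico
    {n : ℕ} (A B : Matrix (Fin n) (Fin n) ℂ)
    (hA : A.IsHermitian) (hB : B.IsHermitian)
    (hAe : ∀ i, hA.eigenvalues i ∈ Set.Ico (-2 : ℝ) 2)
    (hBe : ∀ i, hB.eigenvalues i ∈ Set.Ico (-2 : ℝ) 2)
    (h : Commute (NormedSpace.exp ((-(Real.pi / 2 : ℂ) * Complex.I) • A))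
      (NormedSpace.exp ((-(Real.pi / 2 : ℂ) * Complex.I) • B))) :
    Commute A B := by
  set s : ℂ := -(Real.pi / 2 : ℂ) * Complex.I with hs
  set r : ℂ → ℂ := fun z => (2 * Complex.I / (Real.pi : ℂ)) * Complex.log z with hr
  set t : Finset ℂ := (Finset.univ.image fun i => Complex.exp (s * hA.eigenvalues i)) ∪
      (Finset.univ.image fun i => Complex.exp (s * hB.eigenvalues i)) with ht
  set p : ℂ[X] := Lagrange.interpolate t id r with hpdef
  have hinj : Set.InjOn id (t : Set ℂ) := Set.injOn_id _
  have hnode : ∀ z ∈ t, p.eval z = r z := fun z hz =>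
    Lagrange.eval_interpolate_at_node r hinj hz
  have hval : ∀ lam : ℝ, lam ∈ Set.Ico (-2 : ℝ) 2 → r (Complex.exp (s * lam)) = lam := by
    intro lam hlam
    have hπ := Real.pi_pos
    have heq : s * (lam : ℂ) = ((-(Real.pi / 2) * lam : ℝ) : ℂ) * Complex.I := by
      rw [hs]; push_cast; ring
    have him : (s * (lam : ℂ)).im = -(Real.pi / 2) * lam := by
      rw [heq]; simp
    have h1 : -Real.pi < (s * (lam : ℂ)).im := by
      rw [him]; nlinarith [hlam.2]
    have h2 : (s * (lam : ℂ)).im ≤ Real.pi := by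
      rw [him]; nlinarith [hlam.1]
    have hπ' : (Real.pi : ℂ) ≠ 0 := by exact_mod_cast Real.pi_ne_zero
    show (2 * Complex.I / (Real.pi : ℂ)) * Complex.log (Complex.exp (s * lam)) = lam
    rw [Complex.log_exp h1 h2, hs]
    field_simp
    ring_nf
    rw [Complex.I_sq]
    ring
  have hpA : ∀ i, p.eval (Complex.exp (s * hA.eigenvalues i)) = (hA.eigenvalues i : ℂ) := by
    intro i
    rw [hnode _ (Finset.mem_union_left _ (Finset.mem_image.mpr ⟨i, Finset.mem_univ i, rfl⟩)),
      hval _ (hAe i)]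
  have hpB : ∀ i, p.eval (Complex.exp (s * hB.eigenvalues i)) = (hB.eigenvalues i : ℂ) := by
    intro i
    rw [hnode _ (Finset.mem_union_right _ (Finset.mem_image.mpr ⟨i, Finset.mem_univ i, rfl⟩)),
      hval _ (hBe i)]
  have eA := aeval_exp_smul A hA s p hpA
  have eB := aeval_exp_smul B hB s p hpB
  rw [← eA, ← eB]
  exact commute_aeval_aeval h p p

end
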